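/- For d = 3, let T_j : (ℤ/3)^3 \to (ℤ/3)^3 (j = 0, 1, 2) be the CNOT map that replaces coordinate j+1 (mod 3) of x by x_{j+1} + x_j (mod 3) and leaves the other coordinates unchanged. Then the composition of the eight maps T_0, T_1, T_2, T_0, T_1, T_2, T_0, T_1 applied in this order equals the cyclic shift sending (e_0, e_1, e_2) to (e_1, e_2, e_0); i.e. eight CNOT gates suffice to implement the qutrit SWAP gate. -/

import Mathlib

def cnot (d : ℕ) (j : ZMod d) (x : ZMod d → ZMod d) : ZMod d → ZMod d :=
  Function.update x (j + 1) (x (j + 1) + x j)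

private def tri (a b c : ZMod 3) : ZMod 3 → ZMod 3 :=
  fun k => if k = 0 then a else if k = 1 then b else c

private lemma z301 : (0 : ZMod 3) + 1 = 1 := rfl
private lemma z311 : (1 : ZMod 3) + 1 = 2 := rfl
private lemma z321 : (2 : ZMod 3) + 1 = 0 := rfl
private lemma zne01 : (0 : ZMod 3) ≠ 1 := by decide
private lemma zne02 : (0 : ZMod 3) ≠ 2 := by decide
private lemma zne10 : (1 : ZMod 3) ≠ 0 := by decide
private lemma zne12 : (1 : ZMod 3) ≠ 2 := by decide
private lemma zne20 : (2 : ZMod 3) ≠ 0 := by decide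
private lemma zne21 : (2 : ZMod 3) ≠ 1 := by decide

private lemma cnot_tri0 (a b c : ZMod 3) : cnot 3 0 (tri a b c) = tri a (b + a) c := by
  funext k
  rcases (show k = 0 ∨ k = 1 ∨ k = 2 by revert k; decide) with rfl | rfl | rfl <;>
    simp [cnot, tri, Function.update_apply, z301, z311, z321,
      zne01, zne02, zne10, zne12, zne20, zne21]

private lemma cnot_tri1 (a b c : ZMod 3) : cnot 3 1 (tri a b c) = tri a b (c + b) := by
  funext k
  rcases (show k = 0 ∨ k = 1 ∨ k = 2 by revert k; decide) with rfl | rfl | rfl <;>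
    simp [cnot, tri, Function.update_apply, z301, z311, z321,
      zne01, zne02, zne10, zne12, zne20, zne21]

private lemma cnot_tri2 (a b c : ZMod 3) : cnot 3 2 (tri a b c) = tri (a + c) b c := by
  funext k
  rcases (show k = 0 ∨ k = 1 ∨ k = 2 by revert k; decide) with rfl | rfl | rfl <;>
    simp [cnot, tri, Function.update_apply, z301, z311, z321,
      zne01, zne02, zne10, zne12, zne20, zne21]

theorem stmt_17 :
    ∀ x : ZMod 3 → ZMod 3,
      cnot 3 1 (cnot 3 0 (cnot 3 2 (cnot 3 1 (cnot 3 0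
        (cnot 3 2 (cnot 3 1 (cnot 3 0 x))))))) = fun j => x (j + 1) := by
  intro x
  have hx : x = tri (x 0) (x 1) (x 2) := by
    funext k
    rcases (show k = 0 ∨ k = 1 ∨ k = 2 by revert k; decide) with rfl | rfl | rfl <;> simp [tri, zne10, zne12, zne20, zne21]
  rw [hx, cnot_tri0, cnot_tri1, cnot_tri2, cnot_tri0, cnot_tri1, cnot_tri2,
    cnot_tri0, cnot_tri1]
  funext j
  rcases (show j = 0 ∨ j = 1 ∨ j = 2 by revert j; decide) with rfl | rfl | rfl <;>
  · simp [tri, z301, z311, z321, zne01, zne02, zne10, zne12, zne20, zne21]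
    ring_nf
    simp only [show (3 : ZMod 3) = 0 by decide, show (6 : ZMod 3) = 0 by decide,
      show (4 : ZMod 3) = 1 by decide, show (9 : ZMod 3) = 0 by decide,
      show (13 : ZMod 3) = 1 by decide]
    ring
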